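/- The term rewriting system on terms in one variable x over a binary operation, with the single rule replacing a subterm of the form a·(b·c) by (a·b)·(a·c), is confluent: if terms u and v are equivalent modulo the left distributive law, then there is a term r with u → r and v → r, where → denotes iterated application of the rewriting rule. -/

import Mathlib

/-- Equivalence of terms under the left distributive law. -/
inductive LDRel : FreeMagma Unit → FreeMagma Unit → Prop
  | ld : ∀ a b c, LDRel (a * (b * c)) ((a * b) * (a * c))
  | refl : ∀ a, LDRel a a
  | symm : ∀ {a b}, LDRel a b → LDRel b a
  | trans : ∀ {a b c}, LDRel a b → LDRel b c → LDRel a c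
  | mul_congr : ∀ {a b c d}, LDRel a b → LDRel c d → LDRel (a * c) (b * d)

/-- One step of the rewriting system: replace a subterm `a·(b·c)` by `(a·b)·(a·c)`. -/
inductive Rw : FreeMagma Unit → FreeMagma Unit → Prop
  | ld : ∀ a b c, Rw (a * (b * c)) ((a * b) * (a * c))
  | left : ∀ {a a'} (b), Rw a a' → Rw (a * b) (a' * b)
  | right : ∀ (a) {b b'}, Rw b b' → Rw (a * b) (a * b')

open Relation

local notation "R*" => Relation.ReflTransGen Rw

/-- `dop t s` fully distributes `t` over `s`. -/
def dop (t : FreeMagma Unit) : FreeMagma Unit → FreeMagma Unit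
  | .of a => t * .of a
  | .mul s₁ s₂ => (dop t s₁) * (dop t s₂)

@[simp] lemma dop_of (t : FreeMagma Unit) (a : Unit) : dop t (.of a) = t * .of a := rfl
@[simp] lemma dop_mul (t s₁ s₂ : FreeMagma Unit) :
    dop t (s₁ * s₂) = dop t s₁ * dop t s₂ := rfl

/-- Full development of a term. -/
def der : FreeMagma Unit → FreeMagma Unit
  | .of a => .of a
  | .mul t₁ t₂ => dop (der t₁) (der t₂)

@[simp] lemma der_of (a : Unit) : der (.of a) = .of a := rfl
@[simp] lemma der_mul (t₁ t₂ : FreeMagma Unit) : der (t₁ * t₂) = dop (der t₁) (der t₂) := rfl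

lemma rtg_mul_left {a a' : FreeMagma Unit} (b : FreeMagma Unit) (h : R* a a') :
    R* (a * b) (a' * b) :=
  h.lift (· * b) (fun _ _ h => Rw.left b h)

lemma rtg_mul_right (a : FreeMagma Unit) {b b' : FreeMagma Unit} (h : R* b b') :
    R* (a * b) (a * b') :=
  h.lift (a * ·) (fun _ _ h => Rw.right a h)

lemma rtg_mul {a a' b b' : FreeMagma Unit} (h₁ : R* a a') (h₂ : R* b b') :
    R* (a * b) (a' * b') :=
  (rtg_mul_left b h₁).trans (rtg_mul_right a' h₂)

lemma rtg_dop (t : FreeMagma Unit) : ∀ s, R* (t * s) (dop t s)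
  | .of a => ReflTransGen.refl
  | .mul s₁ s₂ =>
    (ReflTransGen.single (Rw.ld t s₁ s₂)).trans
      (rtg_mul (rtg_dop t s₁) (rtg_dop t s₂))

lemma rtg_der : ∀ t, R* t (der t)
  | .of a => ReflTransGen.refl
  | .mul t₁ t₂ =>
    (rtg_mul (rtg_der t₁) (rtg_der t₂)).trans (rtg_dop (der t₁) (der t₂))

lemma rtg_dop_dop (t u : FreeMagma Unit) : ∀ v, R* (dop t u * dop t v) (dop t (dop u v))
  | .of a => ReflTransGen.refl
  | .mul v₁ v₂ =>
    (ReflTransGen.single (Rw.ld (dop t u) (dop t v₁) (dop t v₂))).trans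
      (rtg_mul (rtg_dop_dop t u v₁) (rtg_dop_dop t u v₂))

lemma dop_mono_left {u u' : FreeMagma Unit} (h : R* u u') :
    ∀ s, R* (dop u s) (dop u' s)
  | .of a => rtg_mul_left _ h
  | .mul s₁ s₂ => rtg_mul (dop_mono_left h s₁) (dop_mono_left h s₂)

lemma dop_mono_right_step (t : FreeMagma Unit) {v v' : FreeMagma Unit} (h : Rw v v') :
    R* (dop t v) (dop t v') := by
  induction h with
  | ld a b c => exact ReflTransGen.single (Rw.ld (dop t a) (dop t b) (dop t c))
  | left b _ ih => exact rtg_mul_left _ ih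
  | right a _ ih => exact rtg_mul_right _ ih

lemma dop_mono_right (t : FreeMagma Unit) {v v' : FreeMagma Unit} (h : R* v v') :
    R* (dop t v) (dop t v') := by
  induction h with
  | refl => exact ReflTransGen.refl
  | tail _ h ih => exact ih.trans (dop_mono_right_step t h)

/-- Key lemma: `dop` left-distributes over itself, up to rewriting. -/
lemma rtg_dop_assoc (t u : FreeMagma Unit) :
    ∀ v, R* (dop t (dop u v)) (dop (dop t u) (dop t v))
  | .of a =>
    show R* (dop t u * (t * .of a)) (dop (dop t u) t * (dop t u * .of a)) from
    (ReflTransGen.single (Rw.ld (dop t u) t (.of a))).trans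
      (rtg_mul_left _ (rtg_dop (dop t u) t))
  | .mul v₁ v₂ =>
    show R* (dop t (dop u v₁) * dop t (dop u v₂))
        (dop (dop t u) (dop t v₁) * dop (dop t u) (dop t v₂)) from
    rtg_mul (rtg_dop_assoc t u v₁) (rtg_dop_assoc t u v₂)

/-- One step lands below the full development. -/
lemma rw_rtg_der {t s : FreeMagma Unit} (h : Rw t s) : R* s (der t) := by
  induction h with
  | ld a b c =>
    exact (rtg_mul ((rtg_mul (rtg_der a) (rtg_der b)).trans (rtg_dop _ _))
        ((rtg_mul (rtg_der a) (rtg_der c)).trans (rtg_dop _ _))).trans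
      (rtg_dop_dop (der a) (der b) (der c))
  | left b _ ih =>
    exact (rtg_mul ih (rtg_der b)).trans (rtg_dop _ _)
  | right a _ ih =>
    exact (rtg_mul (rtg_der a) ih).trans (rtg_dop _ _)

/-- Monotonicity of full development. -/
lemma der_mono_step {t s : FreeMagma Unit} (h : Rw t s) : R* (der t) (der s) := by
  induction h with
  | ld a b c => exact rtg_dop_assoc (der a) (der b) (der c)
  | left b _ ih => exact dop_mono_left ih _
  | right a _ ih => exact dop_mono_right _ ih

lemma der_mono {t s : FreeMagma Unit} (h : R* t s) : R* (der t) (der s) := by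
  induction h with
  | refl => exact ReflTransGen.refl
  | tail _ h ih => exact ih.trans (der_mono_step h)

lemma der_iter_mono (n : ℕ) {t s : FreeMagma Unit} (h : R* t s) :
    R* (der^[n] t) (der^[n] s) := by
  induction n generalizing t s with
  | zero => exact h
  | succ n ih =>
    rw [Function.iterate_succ_apply, Function.iterate_succ_apply]
    exact ih (der_mono h)

lemma rtg_der_iter (t : FreeMagma Unit) (n : ℕ) : R* t (der^[n] t) := by
  induction n with
  | zero => exact ReflTransGen.refl
  | succ n ih =>
    rw [Function.iterate_succ_apply']
    exact ih.trans (rtg_der _)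

/-- Cofinality of the iterated full development. -/
lemma cofinal {t s : FreeMagma Unit} (h : R* t s) : ∃ n, R* s (der^[n] t) := by
  induction h with
  | refl => exact ⟨0, ReflTransGen.refl⟩
  | @tail u s _ h ih =>
    obtain ⟨n, hn⟩ := ih
    refine ⟨n + 1, (rw_rtg_der h).trans ?_⟩
    rw [Function.iterate_succ_apply']
    exact der_mono hn

/-- Confluence of the rewriting relation. -/
lemma rw_confluent {t s₁ s₂ : FreeMagma Unit} (h₁ : R* t s₁) (h₂ : R* t s₂) :
    ∃ r, R* s₁ r ∧ R* s₂ r := by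
  obtain ⟨n, hn⟩ := cofinal h₁
  obtain ⟨m, hm⟩ := cofinal h₂
  refine ⟨der^[m] (der^[n] t), hn.trans (rtg_der_iter _ m), hm.trans ?_⟩
  exact der_iter_mono m (rtg_der_iter t n)

theorem ld_rewriting_confluent (u v : FreeMagma Unit) (h : LDRel u v) :
    ∃ r : FreeMagma Unit,
      Relation.ReflTransGen Rw u r ∧ Relation.ReflTransGen Rw v r := by
  induction h with
  | ld a b c => exact ⟨_, ReflTransGen.single (Rw.ld a b c), ReflTransGen.refl⟩
  | refl a => exact ⟨a, ReflTransGen.refl, ReflTransGen.refl⟩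
  | symm _ ih => obtain ⟨r, h₁, h₂⟩ := ih; exact ⟨r, h₂, h₁⟩
  | trans _ _ ih₁ ih₂ =>
    obtain ⟨r₁, ha, hb⟩ := ih₁
    obtain ⟨r₂, hb', hc⟩ := ih₂
    obtain ⟨r, hr₁, hr₂⟩ := rw_confluent hb hb'
    exact ⟨r, ha.trans hr₁, hc.trans hr₂⟩
  | mul_congr _ _ ih₁ ih₂ =>
    obtain ⟨r₁, ha, hb⟩ := ih₁
    obtain ⟨r₂, hc, hd⟩ := ih₂
    exact ⟨r₁ * r₂, rtg_mul ha hc, rtg_mul hb hd⟩
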